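/- ε-deformed fermionic determinant identity: let u_1,...,u_n be pairwise anticommuting, v_1,...,v_n pairwise anticommuting, with ε u_i v_j = v_j u_i for all i,j for a central indeterminate ε, and all squares u_i^2 = v_j^2 = 0. Then det(f_0 + f_1 t u_i v_j)_{i,j=1}^n = ε^{C(n,2)} t^n n! f_1^n u_1···u_n v_1···v_n + ε^{C(n−1,2)} t^{n−1} (n−1)! f_0 f_1^{n−1} (Σ_i (−1)^{i−1} u_1···û_i···u_n)(Σ_j (−1)^{j−1} v_1···v̂_j···v_n). -/

import Mathlib

open Equiv List

section Aux
variable {L : Type*} [Ring L] {I : Type*}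


lemma central_pull (q : L) (hq : ∀ x : L, q * x = x * q) (a b : L) :
    a * (q * b) = q * (a * b) := by
  rw [← mul_assoc, ← hq, mul_assoc]

lemma central_pow (q : L) (hq : ∀ x : L, q * x = x * q) (m : ℕ) :
    ∀ x : L, q ^ m * x = x * q ^ m := fun x =>
  ((Commute.pow_left (hq x) m))

lemma move_across (q b : L) (hq : ∀ x : L, q * x = x * q) (w : I → L)
    (h : ∀ i, b * w i = q * (w i * b)) :
    ∀ l : List I, b * (l.map w).prod = q ^ l.length * ((l.map w).prod * b)
  | [] => by simp
  | i :: l => by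
    rw [List.map_cons, List.prod_cons, List.length_cons, ← mul_assoc, h i, mul_assoc,
      mul_assoc, move_across q b hq w h l, central_pull _ (central_pow q hq l.length),
      ← mul_assoc, ← pow_succ']
    congr 1
    rw [← mul_assoc]

lemma prod_split (q : L) (hq : ∀ x : L, q * x = x * q) (a b : I → L)
    (hab : ∀ i j, b j * a i = q * (a i * b j)) :
    ∀ l : List I, (l.map fun i => a i * b i).prod
      = q ^ (l.length.choose 2) * ((l.map a).prod * (l.map b).prod)
  | [] => by simp
  | i :: l => by
    rw [List.map_cons, List.prod_cons, prod_split q hq a b hab l,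
      central_pull _ (central_pow q hq _), mul_assoc (a i) (b i),
      ← mul_assoc (b i), move_across q (b i) hq a (fun j => hab j i) l,
      mul_assoc (q ^ l.length), central_pull _ (central_pow q hq l.length),
      ← mul_assoc, ← pow_add, List.map_cons, List.map_cons, List.prod_cons, List.prod_cons,
      List.length_cons,
      show (l.length + 1).choose 2 = l.length.choose 2 + l.length by
        rw [Nat.choose_succ_succ, Nat.choose_one_right, Nat.add_comm]]
    congr 1
    rw [mul_assoc ((l.map a).prod) (b i), ← mul_assoc (a i)]


lemma update_move : ∀ {m : ℕ} (z : Fin m → L) (q : Fin m) (a b : L),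
    (a * b = -(b * a)) → (∀ i, a * z i = -(z i * a)) → (∀ i, b * z i = -(z i * b)) →
    a * (List.ofFn (Function.update z q b)).prod
      = -(b * (List.ofFn (Function.update z q a)).prod)
  | 0, z, q, a, b, hab, ha, hb => q.elim0
  | m + 1, z, q, a, b, hab, ha, hb => by
    induction q using Fin.cases with
    | zero =>
      have htail : ∀ c : L, (fun i : Fin m => Function.update z 0 c i.succ) = fun i => z i.succ := by
        intro c; funext i; exact Function.update_of_ne (Fin.succ_ne_zero i) _ _
      rw [List.ofFn_succ, List.ofFn_succ, htail, htail, Function.update_self,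
        Function.update_self, List.prod_cons, List.prod_cons, ← mul_assoc, hab, neg_mul,
        mul_assoc]
    | succ j =>
      have htail : ∀ c : L, (fun i : Fin m => Function.update z j.succ c i.succ)
          = Function.update (fun i : Fin m => z i.succ) j c := by
        intro c; funext i
        by_cases hi : i = j
        · subst hi; rw [Function.update_self, Function.update_self]
        · rw [Function.update_of_ne (fun h => hi (Fin.succ_injective _ h)),
            Function.update_of_ne hi]
      have hhead : ∀ c : L, Function.update z j.succ c 0 = z 0 :=
        fun c => Function.update_of_ne (Fin.succ_ne_zero j).symm _ _
      rw [List.ofFn_succ, List.ofFn_succ, htail, htail, hhead, hhead, List.prod_cons,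
        List.prod_cons, ← mul_assoc, ha 0, neg_mul, mul_assoc,
        update_move (fun i : Fin m => z i.succ) j a b hab (fun i => ha i.succ)
          (fun i => hb i.succ),
        show z 0 * -(b * (List.ofFn (Function.update (fun i : Fin m => z i.succ) j a)).prod)
            = -(z 0) * (b * _) by rw [neg_mul, mul_neg],
        ← mul_assoc, neg_mul, ← hb 0, mul_assoc]






lemma ofFn_comp_perm : ∀ {m : ℕ} (w : Fin m → L),
    (∀ i j, w i * w j = -(w j * w i)) → ∀ σ : Equiv.Perm (Fin m),
    (List.ofFn (w ∘ σ)).prod = ((Equiv.Perm.sign σ : ℤ)) • (List.ofFn w).prod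
  | 0, w, hw, σ => by
    have : σ = 1 := Subsingleton.elim σ 1
    subst this; simp
  | m + 1, w, hw, σ => by
    obtain ⟨⟨p, e⟩, hσ⟩ : ∃ pe, Equiv.Perm.decomposeFin.symm pe = σ :=
      ⟨Equiv.Perm.decomposeFin σ, Equiv.symm_apply_apply _ _⟩
    subst hσ
    set σ' := Equiv.Perm.decomposeFin.symm (p, e) with hσ'
    have h0 : (w ∘ σ') 0 = w p := by
      simp [σ', Equiv.Perm.decomposeFin_symm_apply_zero]
    have htail : (fun i : Fin m => (w ∘ σ') i.succ)
        = (fun i : Fin m => w (Equiv.swap 0 p i.succ)) ∘ e := by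
      funext i
      simp [σ', Equiv.Perm.decomposeFin_symm_apply_succ]
    have hw' : ∀ i j : Fin m, w (Equiv.swap 0 p i.succ) * w (Equiv.swap 0 p j.succ)
        = -(w (Equiv.swap 0 p j.succ) * w (Equiv.swap 0 p i.succ)) := fun i j => hw _ _
    have hsign : ((Equiv.Perm.sign σ' : ℤ)) = (if p = 0 then 1 else -1) * (Equiv.Perm.sign e : ℤ) := by
      rw [hσ', Equiv.Perm.decomposeFin.symm_sign]
      split <;> simp
    rw [List.ofFn_succ, h0, htail, List.prod_cons,
      ofFn_comp_perm _ hw' e, hsign]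
    by_cases hp : p = 0
    · subst hp
      rw [if_pos rfl, one_mul, mul_smul_comm]
      congr 1
      have heq : (fun i : Fin m => w ((Equiv.swap (0 : Fin (m+1)) 0) i.succ))
          = fun i : Fin m => w i.succ := by
        funext i; rw [Equiv.swap_self]; rfl
      rw [heq, ← List.prod_cons, ← List.ofFn_succ]
    · obtain ⟨j, rfl⟩ : ∃ j : Fin m, Fin.succ j = p := Fin.exists_succ_eq.mpr hp
      have hupd : (fun i : Fin m => w (Equiv.swap 0 j.succ i.succ))
          = Function.update (fun i : Fin m => w i.succ) j (w 0) := by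
        funext i
        by_cases hi : i = j
        · subst hi
          rw [Function.update_self, Equiv.swap_apply_right]
        · rw [Function.update_of_ne hi,
            Equiv.swap_apply_of_ne_of_ne (Fin.succ_ne_zero i)
              (fun h => hi (Fin.succ_injective _ h))]
      rw [hupd, if_neg hp, mul_smul_comm]
      have hkey : w j.succ * (List.ofFn (Function.update (fun i : Fin m => w i.succ) j (w 0))).prod
          = -(w 0 * (List.ofFn (Function.update (fun i : Fin m => w i.succ) j (w j.succ))).prod) :=
        update_move (fun i : Fin m => w i.succ) j (w j.succ) (w 0) (hw _ _)
          (fun i => hw _ _) (fun i => hw _ _)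
      rw [Function.update_eq_self] at hkey
      rw [hkey, ← List.prod_cons, ← List.ofFn_succ, smul_neg, ← neg_smul, neg_one_mul]



lemma phi_det {R : Type*} [CommRing R] (φ : R →+* L) {m : ℕ}
    (M : Matrix (Fin m) (Fin m) R) :
    φ M.det = ∑ σ : Equiv.Perm (Fin m),
      (Equiv.Perm.sign σ : ℤ) • (List.ofFn fun i => φ (M (σ i) i)).prod := by
  rw [Matrix.det_apply, map_sum]
  refine Finset.sum_congr rfl fun σ _ => ?_
  rw [Units.smul_def, map_zsmul, ← List.prod_ofFn, map_list_prod, List.map_ofFn]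
  rfl

lemma perm_sum_eval {m : ℕ} (q : L) (hq : ∀ x : L, q * x = x * q) (a b : Fin m → L)
    (hb : ∀ i j, b i * b j = -(b j * b i))
    (hab : ∀ i j, b j * a i = q * (a i * b j)) :
    ∑ σ : Equiv.Perm (Fin m), (Equiv.Perm.sign σ : ℤ) •
        (List.ofFn fun i => a i * b (σ i)).prod
      = m.factorial • (q ^ (m.choose 2) * ((List.ofFn a).prod * (List.ofFn b).prod)) := by
  have hterm : ∀ σ : Equiv.Perm (Fin m),
      (List.ofFn fun i => a i * b (σ i)).prod
        = (Equiv.Perm.sign σ : ℤ) • (q ^ (m.choose 2) * ((List.ofFn a).prod * (List.ofFn b).prod)) := by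
    intro σ
    have h1 : (List.ofFn fun i => a i * b (σ i)).prod
        = ((List.finRange m).map fun i => a i * (b ∘ σ) i).prod := by
      rw [List.ofFn_eq_map]; rfl
    rw [h1, prod_split q hq a (b ∘ σ) (fun i j => hab i (σ j)) (List.finRange m),
      ← List.ofFn_eq_map, ← List.ofFn_eq_map, ofFn_comp_perm b hb σ,
      List.length_finRange, mul_smul_comm, mul_smul_comm]
  calc ∑ σ : Equiv.Perm (Fin m), (Equiv.Perm.sign σ : ℤ) •
        (List.ofFn fun i => a i * b (σ i)).prod
      = ∑ _σ : Equiv.Perm (Fin m),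
          (q ^ (m.choose 2) * ((List.ofFn a).prod * (List.ofFn b).prod)) := by
        refine Finset.sum_congr rfl fun σ _ => ?_
        rw [hterm σ, smul_smul]
        norm_cast
        rw [Int.units_mul_self, Units.val_one, one_smul]
    _ = m.factorial • (q ^ (m.choose 2) * ((List.ofFn a).prod * (List.ofFn b).prod)) := by
        rw [Finset.sum_const, Finset.card_univ, Fintype.card_perm, Fintype.card_fin]

lemma sort_erase {k : ℕ} (p : Fin (k + 1)) :
    ((Finset.univ : Finset (Fin (k+1))).erase p).sort (· ≤ ·)
      = (List.finRange k).map p.succAbove := by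
  refine (fun hp hs => List.Perm.eq_of_pairwise' (r := (· ≤ ·)) (Finset.pairwise_sort _ _) hs hp) ?_ ?_
  · apply List.perm_of_nodup_nodup_toFinset_eq (Finset.sort_nodup _ _)
    · exact (List.nodup_finRange k).map (Fin.succAbove_right_injective)
    · rw [Finset.sort_toFinset]
      ext x
      simp only [List.mem_toFinset, List.mem_map, List.mem_finRange, true_and,
        Finset.mem_erase, Finset.mem_univ, and_true]
      constructor
      · intro hx
        exact Fin.exists_succAbove_eq hx
      · rintro ⟨a, rfl⟩
        exact Fin.succAbove_ne p a
  · refine List.Pairwise.map _ ?_ (List.pairwise_le_finRange k)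
    intro a b hab
    exact (Fin.strictMono_succAbove p).monotone hab


end Aux

set_option maxHeartbeats 2000000 in
/-- ε-deformed fermionic determinant identity: `u_1,…,u_n` pairwise anticommute,
`v_1,…,v_n` pairwise anticommute, all squares vanish, `v_j u_i = ε u_i v_j` for central
(bookkeeping) indeterminates `ε, t`, and central scalars `f_0, f_1`. Then
`det (f_0 + f_1 t u_i v_j) = ε^{C(n,2)} t^n n! f_1^n u_1⋯u_n v_1⋯v_n
 + ε^{C(n-1,2)} t^{n-1} (n-1)! f_0 f_1^{n-1}
   (∑_i (-1)^{i-1} u_1⋯û_i⋯u_n)(∑_j (-1)^{j-1} v_1⋯v̂_j⋯v_n)`. -/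
theorem stmt17 (Λ : Type*) [Ring Λ] (h2 : (2 : Λ) ≠ 0) (n : ℕ) (hn : 2 ≤ n)
    (ε t f0 f1 : Λ)
    (hε : ∀ x : Λ, ε * x = x * ε) (ht : ∀ x : Λ, t * x = x * t)
    (hf0 : ∀ x : Λ, f0 * x = x * f0) (hf1 : ∀ x : Λ, f1 * x = x * f1)
    (u v : Fin n → Λ)
    (hu : ∀ i j, u i * u j = -(u j * u i)) (hu2 : ∀ i, u i * u i = 0)
    (hv : ∀ i j, v i * v j = -(v j * v i)) (hv2 : ∀ i, v i * v i = 0)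
    (huv : ∀ i j, v j * u i = ε * (u i * v j)) :
    (∑ σ : Equiv.Perm (Fin n), (Equiv.Perm.sign σ : ℤ) •
      ((List.finRange n).map (fun i => f0 + f1 * t * u i * v (σ i))).prod) =
    ε ^ (n.choose 2) * t ^ n * (n.factorial : Λ) * f1 ^ n *
      ((List.finRange n).map u).prod * ((List.finRange n).map v).prod +
    ε ^ ((n - 1).choose 2) * t ^ (n - 1) * ((n - 1).factorial : Λ) * f0 * f1 ^ (n - 1) *
      (∑ i : Fin n, (-1 : Λ) ^ (i : ℕ) *
        ((((Finset.univ : Finset (Fin n)).erase i).sort (· ≤ ·)).map u).prod) *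
      (∑ j : Fin n, (-1 : Λ) ^ (j : ℕ) *
        ((((Finset.univ : Finset (Fin n)).erase j).sort (· ≤ ·)).map v).prod) := by
  obtain ⟨k, rfl⟩ : ∃ k, n = k + 1 := ⟨n - 1, by omega⟩
  simp only [Nat.add_sub_cancel]
  -- the commuting generators
  set G : Set Λ := insert ε (insert t (insert f0 (insert f1
    (Set.range fun p : Fin (k+1) × Fin (k+1) => u p.1 * v p.2)))) with hG
  have xcomm : ∀ i j p q : Fin (k+1),
      (u i * v j) * (u p * v q) = (u p * v q) * (u i * v j) := by
    have key : ∀ i j p q : Fin (k+1),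
        (u i * v j) * (u p * v q) = ε * (u i * (u p * (v j * v q))) := by
      intro i j p q
      rw [mul_assoc, ← mul_assoc (v j), huv, mul_assoc, central_pull ε hε, mul_assoc (u p)]
    intro i j p q
    rw [key, key]
    rw [show u p * (u i * (v q * v j)) = u i * (u p * (v j * v q)) by
      rw [hv q j, ← mul_assoc, hu p i, ← mul_assoc, neg_mul, mul_neg, neg_neg, mul_assoc]]
  have hcomm : ∀ a ∈ G, ∀ b ∈ G, a * b = b * a := by
    intro a ha b hb
    simp only [hG, Set.mem_insert_iff, Set.mem_range] at ha hb
    rcases ha with rfl | rfl | rfl | rfl | ⟨pa, rfl⟩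
    · exact hε b
    · exact ht b
    · exact hf0 b
    · exact hf1 b
    · rcases hb with rfl | rfl | rfl | rfl | ⟨pb, rfl⟩
      · exact (hε _).symm
      · exact (ht _).symm
      · exact (hf0 _).symm
      · exact (hf1 _).symm
      · exact xcomm _ _ _ _
  set S := Subring.closure G with hS
  letI : CommRing S := Subring.closureCommRingOfComm hcomm
  have memε : ε ∈ S := Subring.subset_closure (by simp [hG])
  have memt : t ∈ S := Subring.subset_closure (by simp [hG])
  have memf0 : f0 ∈ S := Subring.subset_closure (by simp [hG])
  have memf1 : f1 ∈ S := Subring.subset_closure (by simp [hG])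
  have memx : ∀ i j : Fin (k+1), u i * v j ∈ S := fun i j => Subring.subset_closure (by
    simp only [hG, Set.mem_insert_iff, Set.mem_range]
    exact Or.inr (Or.inr (Or.inr (Or.inr ⟨(i, j), rfl⟩))))
  set ε' : S := ⟨ε, memε⟩ with hε'
  set t' : S := ⟨t, memt⟩ with ht'
  set f0' : S := ⟨f0, memf0⟩ with hf0'
  set f1' : S := ⟨f1, memf1⟩ with hf1'
  set x' : Fin (k+1) → Fin (k+1) → S := fun i j => ⟨u i * v j, memx i j⟩ with hx'
  set cc : S := f1' * t' with hcc
  set A : Matrix (Fin (k+1)) (Fin (k+1)) S :=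
    Matrix.of fun r c => f0' + cc * x' c r with hA
  have hdet : ∀ M : Matrix (Fin (k+1)) (Fin (k+1)) S,
      M.det = Matrix.detRowAlternating M := fun _ => rfl
  have step1 : (∑ σ : Equiv.Perm (Fin (k+1)), (Equiv.Perm.sign σ : ℤ) •
      ((List.finRange (k+1)).map (fun i => f0 + f1 * t * u i * v (σ i))).prod)
      = S.subtype A.det := by
    rw [phi_det S.subtype A]
    refine Finset.sum_congr rfl fun σ _ => ?_
    congr 1
    rw [List.ofFn_eq_map]
    refine congrArg List.prod (List.map_congr_left fun i _ => ?_)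
    show f0 + f1 * t * u i * v (σ i) = f0 + f1 * t * (u i * v (σ i))
    rw [mul_assoc (f1 * t)]
  set m1 : Fin (k+1) → (Fin (k+1) → S) := fun r => fun c => cc * x' c r with hm1
  set m2 : Fin (k+1) → (Fin (k+1) → S) := fun _ => fun _ => f0' with hm2
  have hAadd : (A : Matrix (Fin (k+1)) (Fin (k+1)) S) = m1 + m2 := by
    funext r c
    show f0' + cc * x' c r = cc * x' c r + f0'
    rw [add_comm]
  have hvanish : ∀ s : Finset (Fin (k+1)),
      s ∉ insert Finset.univ (Finset.image (Finset.univ.erase ·) Finset.univ) →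
      Matrix.detRowAlternating (Finset.piecewise s m1 m2) = (0 : S) := by
    intro s hs
    simp only [Finset.mem_insert, Finset.mem_image, Finset.mem_univ, true_and] at hs
    push_neg at hs
    obtain ⟨hsu, hse⟩ := hs
    obtain ⟨i, hi⟩ : ∃ i, i ∉ s := by
      by_contra h; push_neg at h; exact hsu (Finset.eq_univ_iff_forall.mpr h)
    obtain ⟨j, hj, hji⟩ : ∃ j, j ∉ s ∧ j ≠ i := by
      by_contra h; push_neg at h
      exact hse i (Finset.Subset.antisymm
        (fun a ha => by
          rcases Finset.mem_erase.mp ha with ⟨hai, _⟩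
          by_contra has; exact hai (h a has))
        (fun a ha => Finset.mem_erase.mpr ⟨fun haa => hi (haa ▸ ha), Finset.mem_univ a⟩))
    exact AlternatingMap.map_eq_zero_of_eq _ _
      (show Finset.piecewise s m1 m2 j = Finset.piecewise s m1 m2 i by
        rw [Finset.piecewise_eq_of_notMem _ _ _ hj,
          Finset.piecewise_eq_of_notMem _ _ _ hi]) hji
  have hsum : A.det = Matrix.detRowAlternating (Finset.univ.piecewise m1 m2)
      + ∑ i0 : Fin (k+1), Matrix.detRowAlternating ((Finset.univ.erase i0).piecewise m1 m2) := by
    rw [hdet, hAadd]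
    rw [show (Matrix.detRowAlternating (m1 + m2 : Matrix (Fin (k+1)) (Fin (k+1)) S) : S)
        = ∑ s : Finset (Fin (k+1)), Matrix.detRowAlternating (Finset.piecewise s m1 m2) from
      Matrix.detRowAlternating.toMultilinearMap.map_add_univ m1 m2]
    rw [← Finset.sum_subset (Finset.subset_univ (insert Finset.univ
          (Finset.image (Finset.univ.erase ·) Finset.univ)))
        (fun s _ hs => hvanish s hs)]
    rw [Finset.sum_insert (by
        intro hmem
        rcases Finset.mem_image.mp hmem with ⟨i0, _, hi0⟩
        exact (Finset.notMem_erase i0 Finset.univ)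
          (by rw [hi0]; exact Finset.mem_univ i0))]
    congr 1
    rw [Finset.sum_image (fun i _ j _ hij => by
        by_contra hne
        exact (Finset.notMem_erase i Finset.univ)
          (by rw [hij]; exact Finset.mem_erase.mpr ⟨hne, Finset.mem_univ i⟩))]
  have hsub : ∀ z : S, S.subtype z = (z : Λ) := fun z => rfl
  have coe_shift : ∀ (a b : S) (Z : Λ), (a : Λ) * ((b : Λ) * Z) = ((a * b : S) : Λ) * Z := by
    intro a b Z
    rw [← mul_assoc]
    norm_cast
  have hT1 : S.subtype (Matrix.detRowAlternating (Finset.univ.piecewise m1 m2))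
      = ε ^ ((k+1).choose 2) * t ^ (k+1) * (((k+1).factorial : ℕ) : Λ) * f1 ^ (k+1) *
        ((List.finRange (k+1)).map u).prod * ((List.finRange (k+1)).map v).prod := by
    have hpw : Finset.univ.piecewise m1 m2
        = (cc • (Matrix.of fun r c => x' c r) : Matrix (Fin (k+1)) (Fin (k+1)) S) := by
      funext r c
      rw [Finset.piecewise_eq_of_mem _ _ _ (Finset.mem_univ r)]
      rfl
    rw [hpw, ← hdet, Matrix.det_smul, Fintype.card_fin, map_mul, phi_det,
      show (∑ σ : Equiv.Perm (Fin (k+1)), (Equiv.Perm.sign σ : ℤ) •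
          (List.ofFn fun i => S.subtype ((Matrix.of fun r c => x' c r : Matrix (Fin (k+1)) (Fin (k+1)) S) (σ i) i)).prod)
        = (k+1).factorial • (ε ^ ((k+1).choose 2) *
            ((List.ofFn u).prod * (List.ofFn v).prod)) from
        perm_sum_eval ε hε u v hv huv,
      ← List.ofFn_eq_map, ← List.ofFn_eq_map, nsmul_eq_mul, hsub]
    rw [show (((k+1).factorial : ℕ) : Λ) = ((((k+1).factorial : ℕ) : S) : Λ) by push_cast; rfl]
    rw [show (ε ^ ((k+1).choose 2) : Λ) = ((ε' ^ ((k+1).choose 2) : S) : Λ) by push_cast; rfl]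
    rw [show (t ^ (k+1) : Λ) = ((t' ^ (k+1) : S) : Λ) by push_cast; rfl]
    rw [show (f1 ^ (k+1) : Λ) = ((f1' ^ (k+1) : S) : Λ) by push_cast; rfl]
    rw [coe_shift, coe_shift,
      mul_assoc (((ε' ^ ((k+1).choose 2) : S) : Λ) * ((t' ^ (k+1) : S) : Λ) *
        ((((k+1).factorial : ℕ) : S) : Λ) * ((f1' ^ (k+1) : S) : Λ))]
    rw [show ((ε' ^ ((k+1).choose 2) : S) : Λ) * ((t' ^ (k+1) : S) : Λ) *
        ((((k+1).factorial : ℕ) : S) : Λ) * ((f1' ^ (k+1) : S) : Λ)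
        = ((ε' ^ ((k+1).choose 2) * t' ^ (k+1) * (((k+1).factorial : ℕ) : S) * f1' ^ (k+1) : S) : Λ) by
      norm_cast]
    congr 1
    norm_cast
    rw [hcc]
    ring_nf
  have hT2 : ∀ i0 : Fin (k+1),
      S.subtype (Matrix.detRowAlternating ((Finset.univ.erase i0).piecewise m1 m2))
      = ∑ j0 : Fin (k+1),
          (((-1 : S)^((i0 : ℕ)+(j0 : ℕ)) * f0' * cc^k * ((k.factorial : ℕ) : S)
             * ε'^(k.choose 2) : S) : Λ)
          * ((List.ofFn (u ∘ j0.succAbove)).prod * (List.ofFn (v ∘ i0.succAbove)).prod) := by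
    intro i0
    have hMs : (Finset.univ.erase i0).piecewise m1 m2
        = Matrix.updateRow (Matrix.of fun r c => cc * x' c r) i0 (fun _ => f0') := by
      funext r c
      by_cases hr : r = i0
      · subst hr
        rw [Finset.piecewise_eq_of_notMem _ _ _ (Finset.notMem_erase _ _)]
        simp [Matrix.updateRow_apply, hm2]
      · rw [Finset.piecewise_eq_of_mem _ _ _ (Finset.mem_erase.mpr ⟨hr, Finset.mem_univ _⟩)]
        simp [Matrix.updateRow_apply, hr, hm1]
    rw [hMs, ← hdet, Matrix.det_succ_row _ i0, map_sum]
    refine Finset.sum_congr rfl fun j0 _ => ?_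
    have hsub2 : (Matrix.updateRow (Matrix.of fun r c => cc * x' c r) i0
          (fun _ => f0')).submatrix i0.succAbove j0.succAbove
        = cc • (Matrix.of fun (a b : Fin k) => x' (j0.succAbove b) (i0.succAbove a)) := by
      funext a b
      rw [Matrix.submatrix_apply, Matrix.updateRow_apply, if_neg (Fin.succAbove_ne i0 a)]
      rfl
    rw [hsub2, Matrix.det_smul, Fintype.card_fin, Matrix.updateRow_self]
    rw [map_mul, map_mul, map_mul, phi_det,
      show (∑ τ : Equiv.Perm (Fin k), (Equiv.Perm.sign τ : ℤ) •
          (List.ofFn fun a => S.subtype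
            ((Matrix.of fun (a b : Fin k) => x' (j0.succAbove b) (i0.succAbove a)) (τ a) a)).prod)
        = k.factorial • (ε ^ (k.choose 2) *
            ((List.ofFn (u ∘ j0.succAbove)).prod * (List.ofFn (v ∘ i0.succAbove)).prod)) from
        perm_sum_eval ε hε (u ∘ j0.succAbove) (v ∘ i0.succAbove)
          (fun i j => hv _ _) (fun i j => huv _ _),
      nsmul_eq_mul]
    simp only [hsub]
    rw [show ((k.factorial : ℕ) : Λ) = (((k.factorial : ℕ) : S) : Λ) by push_cast; rfl]
    rw [show (ε ^ (k.choose 2) : Λ) = ((ε' ^ (k.choose 2) : S) : Λ) by push_cast; rfl]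
    rw [mul_assoc ((((-1 : S) ^ ((i0 : ℕ) + (j0 : ℕ)) : S) : Λ)) ((f0' : S) : Λ)]
    rw [coe_shift, coe_shift, coe_shift, coe_shift]
  have hneg1 : ∀ x : Λ, (-1 : Λ) * x = x * (-1 : Λ) := fun x => by
    rw [neg_one_mul, mul_neg_one]
  have hRHS2 : ∑ i0 : Fin (k+1), ∑ j0 : Fin (k+1),
      (((-1 : S)^((i0 : ℕ)+(j0 : ℕ)) * f0' * cc^k * ((k.factorial : ℕ) : S)
         * ε'^(k.choose 2) : S) : Λ)
      * ((List.ofFn (u ∘ j0.succAbove)).prod * (List.ofFn (v ∘ i0.succAbove)).prod)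
      = ε ^ (k.choose 2) * t ^ k * ((k.factorial : ℕ) : Λ) * f0 * f1 ^ k *
        (∑ i : Fin (k+1), (-1 : Λ) ^ (i : ℕ) *
          ((((Finset.univ : Finset (Fin (k+1))).erase i).sort (· ≤ ·)).map u).prod) *
        (∑ j : Fin (k+1), (-1 : Λ) ^ (j : ℕ) *
          ((((Finset.univ : Finset (Fin (k+1))).erase j).sort (· ≤ ·)).map v).prod) := by
    simp only [sort_erase, List.map_map, ← List.ofFn_eq_map, List.map_ofFn]
    rw [show (ε ^ (k.choose 2) * t ^ k * ((k.factorial : ℕ) : Λ) * f0 * f1 ^ k : Λ)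
        = ((ε'^(k.choose 2) * t'^k * ((k.factorial : ℕ) : S) * f0' * f1'^k : S) : Λ) by
      push_cast; rfl]
    rw [mul_assoc ((ε'^(k.choose 2) * t'^k * ((k.factorial : ℕ) : S) * f0' * f1'^k : S) : Λ),
      Finset.sum_mul_sum, Finset.mul_sum]
    rw [Finset.sum_comm]
    refine Finset.sum_congr rfl fun ju _ => ?_
    rw [Finset.mul_sum]
    refine Finset.sum_congr rfl fun iv _ => ?_
    conv_rhs => rw [central_pull _ (central_pow (-1 : Λ) hneg1 (iv : ℕ))]
    conv_rhs => rw [central_pull _ (central_pow (-1 : Λ) hneg1 (iv : ℕ))]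
    conv_rhs => rw [mul_assoc ((-1 : Λ) ^ (ju : ℕ))]
    conv_rhs => rw [central_pull _ (central_pow (-1 : Λ) hneg1 (ju : ℕ))]
    rw [show ((-1 : Λ) ^ (iv : ℕ)) = (((-1 : S) ^ (iv : ℕ) : S) : Λ) by push_cast; rfl,
      show ((-1 : Λ) ^ (ju : ℕ)) = (((-1 : S) ^ (ju : ℕ) : S) : Λ) by push_cast; rfl,
      coe_shift, coe_shift]
    congr 1
    norm_cast
    rw [hcc]
    ring_nf
  rw [step1, hsum, map_add, map_sum, hT1]
  congr 1
  rw [show (∑ i0 : Fin (k+1),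
        S.subtype (Matrix.detRowAlternating ((Finset.univ.erase i0).piecewise m1 m2)))
      = ∑ i0 : Fin (k+1), ∑ j0 : Fin (k+1),
        (((-1 : S)^((i0 : ℕ)+(j0 : ℕ)) * f0' * cc^k * ((k.factorial : ℕ) : S)
           * ε'^(k.choose 2) : S) : Λ)
        * ((List.ofFn (u ∘ j0.succAbove)).prod * (List.ofFn (v ∘ i0.succAbove)).prod) from
    Finset.sum_congr rfl fun i0 _ => hT2 i0]
  exact hRHS2
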